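/- (BMO × BMO → BMO paraproduct estimate.) For all dyadic test functions f, g ∈ S one has ‖π_hh(f,g)‖_{BMO} ≤ C‖f‖_{BMO}‖g‖_{BMO} with an absolute constant C. -/

import Mathlib

open MeasureTheory Set

noncomputable section

namespace Dyadic

/-- A dyadic interval/lacunary tile: `I = [j·2^k, (j+1)·2^k)` with `-M ≤ k ≤ M`,
`I ⊆ [0, 2^M)`.  Lacunary tiles are in bijection with dyadic intervals, so we
identify the tile `P⁺(I) = I × [1/|I|, 2/|I|)` with the data of `I`. -/
structure Tile (M : ℕ) where
  j : ℤ
  k : ℤ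
  hk_lb : -(M : ℤ) ≤ k
  hk_ub : k ≤ (M : ℤ)
  hj : 0 ≤ j
  hsub : ((j : ℝ) + 1) * 2 ^ k ≤ 2 ^ (M : ℤ)

variable {M : ℕ}

/-- The side length `|I_P| = 2^k` of the spatial interval of the tile. -/
def Tile.len (P : Tile M) : ℝ := 2 ^ P.k

/-- The spatial interval `I_P` of the tile. -/
def Tile.ival (P : Tile M) : Set ℝ :=
  Ico ((P.j : ℝ) * 2 ^ P.k) (((P.j : ℝ) + 1) * 2 ^ P.k)

/-- The order `P ≤′ Q` on lacunary tiles: `I_P ⊆ I_Q`. -/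
def Tile.le (P Q : Tile M) : Prop := P.ival ⊆ Q.ival

/-- A (lacunary) tree: a collection of tiles together with a top tile. -/
structure Tree (M : ℕ) where
  tiles : Set (Tile M)
  top : Tile M
  top_mem : top ∈ tiles
  le_top : ∀ P ∈ tiles, P.le top

/-- `|I_T|`, the length of the spatial interval of the top of the tree. -/
def Tree.len (T : Tree M) : ℝ := T.top.len

/-- A collection of tiles is convex if `P₁ ≤′ P ≤′ P₂` with `P₁, P₂` in the
collection implies `P` is in the collection. -/
def IsConvex (PP : Set (Tile M)) : Prop :=
  ∀ P₁ ∈ PP, ∀ P₂ ∈ PP, ∀ P : Tile M, P₁.le P → P.le P₂ → P ∈ PP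

/-- The size `‖a‖_{size(T)} = (1/|I_T|) Σ_{P ∈ T} a(P)` of `a` on a tree `T`. -/
def treeSize (a : Tile M → ℝ) (T : Tree M) : ℝ :=
  (∑ᶠ P ∈ T.tiles, a P) / T.len

/-- The maximal size `‖a‖_{size*(PP)}`: the supremum of `‖a‖_{size(T)}` over all
convex trees `T ⊆ PP` (by convention `0` if there are none). -/
def maxSize (a : Tile M → ℝ) (PP : Set (Tile M)) : ℝ :=
  sSup (insert 0 {s : ℝ | ∃ T : Tree M, T.tiles ⊆ PP ∧ IsConvex T.tiles ∧ s = treeSize a T})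

/-- The complete tree `Tree(P) = {Q : Q ≤′ P}`. -/
def cTree (P : Tile M) : Set (Tile M) := {Q : Tile M | Q.le P}

/-- A tree `T` is complete with respect to `PP` if `T = Tree(P_T) ∩ PP`. -/
def Tree.IsCompleteIn (T : Tree M) (PP : Set (Tile M)) : Prop :=
  T.tiles = cTree T.top ∩ PP

/-- `QQ` is an `α`-packing of the tree `T`: `QQ ⊆ T` and `Σ_{P ∈ QQ} |I_P| ≤ α|I_T|`. -/
def IsPacking (α : ℝ) (QQ : Set (Tile M)) (T : Tree M) : Prop :=
  QQ ⊆ T.tiles ∧ (∑ᶠ P ∈ QQ, Tile.len P) ≤ α * T.len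

/-- `QQ` is a uniform `α`-packing of the tree `T`:
`Σ_{P ∈ QQ, I_P ⊆ J} |I_P| ≤ α|J|` for every dyadic interval `J`. -/
def IsUniformPacking (α : ℝ) (QQ : Set (Tile M)) (T : Tree M) : Prop :=
  QQ ⊆ T.tiles ∧
    ∀ J : Tile M, (∑ᶠ P ∈ {P ∈ QQ | P.ival ⊆ J.ival}, Tile.len P) ≤ α * J.len

/-- Left half of the spatial interval. -/
def Tile.left (P : Tile M) : Set ℝ :=
  Ico ((P.j : ℝ) * 2 ^ P.k) (((P.j : ℝ) + 1 / 2) * 2 ^ P.k)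

/-- Right half of the spatial interval. -/
def Tile.right (P : Tile M) : Set ℝ :=
  Ico (((P.j : ℝ) + 1 / 2) * 2 ^ P.k) (((P.j : ℝ) + 1) * 2 ^ P.k)

/-- The (mother) Haar wavelet `φ_P = |I_P|^{-1/2}(χ_{I_l} - χ_{I_r})`. -/
def Tile.haar (P : Tile M) : ℝ → ℝ := fun x =>
  (Real.sqrt P.len)⁻¹ * (P.left.indicator 1 x - P.right.indicator 1 x)

/-- The Haar (wavelet) coefficient `Wf(P) = ⟨f, φ_P⟩`. -/
def waveCoeff (f : ℝ → ℝ) (P : Tile M) : ℝ := ∫ x, f x * P.haar x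

/-- The average `[f]_{I_P} = (1/|I_P|)∫_{I_P} f`. -/
def tileAvg (f : ℝ → ℝ) (P : Tile M) : ℝ := (∫ x in P.ival, f x) / P.len

/-- The mean `‖f‖_{mean(P)} = (1/|I_P|)∫_{I_P} |f|`. -/
def tileMean (f : ℝ → ℝ) (P : Tile M) : ℝ := (∫ x in P.ival, |f x|) / P.len

/-- The maximal mean `‖f‖_{mean*(PP)} = sup_{P ∈ PP} ‖f‖_{mean(P)}`. -/
def maxMean (f : ℝ → ℝ) (PP : Set (Tile M)) : ℝ :=
  sSup (insert 0 (tileMean f '' PP))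

/-- The dyadic BMO norm `‖f‖_{BMO} = ‖|Wf|²‖_{size*(PP⁺)}^{1/2}`. -/
def bmoNorm (M : ℕ) (f : ℝ → ℝ) : ℝ :=
  Real.sqrt (maxSize (fun P : Tile M => waveCoeff f P ^ 2) univ)

/-- The grid interval `[j·2^{-M}, (j+1)·2^{-M})` at the finest scale. -/
def gridIval (M : ℕ) (j : ℤ) : Set ℝ :=
  Ico ((j : ℝ) * 2 ^ (-(M : ℤ))) (((j : ℝ) + 1) * 2 ^ (-(M : ℤ)))

/-- A dyadic test function: supported on `[0, 2^M)` and constant on every dyadic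
interval of length `2^{-M}`. -/
def IsTestFun (M : ℕ) (f : ℝ → ℝ) : Prop :=
  (∀ x : ℝ, x ∉ Ico (0 : ℝ) (2 ^ (M : ℤ)) → f x = 0) ∧
    ∀ j : ℤ, ∀ x ∈ gridIval M j, ∀ y ∈ gridIval M j, f x = f y

/-- The `L²` norm. -/
def l2Norm (f : ℝ → ℝ) : ℝ := Real.sqrt (∫ x, f x ^ 2)

/-- The `L^∞` norm (as a supremum of values; adequate for test functions). -/
def supNorm (f : ℝ → ℝ) : ℝ := ⨆ x : ℝ, |f x|

/-- The weak `L^r` quasinorm `sup_{λ>0} λ |{|h| ≥ λ}|^{1/r}`. -/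
def weakNorm (r : ℝ) (h : ℝ → ℝ) : ℝ :=
  sSup {s : ℝ | ∃ l : ℝ, 0 < l ∧ s = l * (volume {x : ℝ | l ≤ |h x|}).toReal ^ (1 / r)}

/-- The phase space projection `Π_T f = Σ_{P ∈ T} ⟨f, φ_P⟩ φ_P` onto a tree. -/
def treeProj (T : Tree M) (f : ℝ → ℝ) : ℝ → ℝ := fun x =>
  ∑ᶠ P ∈ T.tiles, waveCoeff f P * P.haar x

/-- The high-low paraproduct `π_hl(f,g) = Σ_P Wf(P) [g]_P φ_P`. -/
def paraHL (M : ℕ) (f g : ℝ → ℝ) : ℝ → ℝ := fun x =>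
  ∑ᶠ P : Tile M, waveCoeff f P * tileAvg g P * P.haar x

/-- The low-high paraproduct `π_lh(f,g) = Σ_P [f]_P Wg(P) φ_P`. -/
def paraLH (M : ℕ) (f g : ℝ → ℝ) : ℝ → ℝ := fun x =>
  ∑ᶠ P : Tile M, tileAvg f P * waveCoeff g P * P.haar x

/-- The high-high paraproduct `π_hh(f,g) = Σ_P Wf(P) Wg(P) χ_{I_P}/|I_P|`. -/
def paraHH (M : ℕ) (f g : ℝ → ℝ) : ℝ → ℝ := fun x =>
  ∑ᶠ P : Tile M, waveCoeff f P * waveCoeff g P * P.ival.indicator 1 x / P.len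

/-- The constant function `1` on `[0, 2^M)`. -/
def oneFn (M : ℕ) : ℝ → ℝ := (Ico (0 : ℝ) (2 ^ (M : ℤ))).indicator 1

/-- A perfect dyadic Calderón–Zygmund operator, recorded via its kernel `K` and
kernel constant `A₀`. -/
structure PDCZ (M : ℕ) where
  K : ℝ → ℝ → ℝ
  A₀ : ℝ
  hA₀ : 0 < A₀
  meas : Measurable (Function.uncurry K)
  bound : ∀ x y : ℝ, x ≠ y → |K x y| ≤ A₀ / |x - y|
  perfectX : ∀ I J : Tile M, Disjoint I.ival J.ival →
    ∀ x ∈ I.ival, ∀ x' ∈ I.ival, ∀ y ∈ J.ival, K x y = K x' y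
  perfectY : ∀ I J : Tile M, Disjoint I.ival J.ival →
    ∀ x ∈ I.ival, ∀ x' ∈ I.ival, ∀ y ∈ J.ival, K y x = K y x'
  diag : ∀ I : Tile M, I.k = -(M : ℤ) → ∀ x ∈ I.ival, ∀ y ∈ I.ival, K x y = 0
  corner₁ : ∀ x ∈ Ico (0 : ℝ) (2 ^ ((M : ℤ) - 1)),
    ∀ y ∈ Ico ((2 : ℝ) ^ ((M : ℤ) - 1)) (2 ^ (M : ℤ)), K x y = 0
  corner₂ : ∀ x ∈ Ico ((2 : ℝ) ^ ((M : ℤ) - 1)) (2 ^ (M : ℤ)),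
    ∀ y ∈ Ico (0 : ℝ) (2 ^ ((M : ℤ) - 1)), K x y = 0

/-- `Tf(x) = ∫ K(x,y) f(y) dy`. -/
def PDCZ.app (Op : PDCZ M) (f : ℝ → ℝ) : ℝ → ℝ := fun x => ∫ y, Op.K x y * f y

/-- The transpose `T*f(x) = ∫ K(y,x) f(y) dy`. -/
def PDCZ.appT (Op : PDCZ M) (f : ℝ → ℝ) : ℝ → ℝ := fun x => ∫ y, Op.K y x * f y

/-- Complex-valued Haar coefficient. -/
def waveCoeffC (b : ℝ → ℂ) (P : Tile M) : ℂ := ∫ x, b x * (P.haar x : ℂ)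

/-- Complex-valued average. -/
def tileAvgC (b : ℝ → ℂ) (P : Tile M) : ℂ := (∫ x in P.ival, b x) / (P.len : ℂ)

/-- BMO norm of a complex-valued function. -/
def bmoNormC (M : ℕ) (b : ℝ → ℂ) : ℝ :=
  Real.sqrt (maxSize (fun P : Tile M => ‖waveCoeffC b P‖ ^ 2) univ)

/-- Complex-valued dyadic test functions. -/
def IsTestFunC (M : ℕ) (b : ℝ → ℂ) : Prop :=
  (∀ x : ℝ, x ∉ Ico (0 : ℝ) (2 ^ (M : ℤ)) → b x = 0) ∧
    ∀ j : ℤ, ∀ x ∈ gridIval M j, ∀ y ∈ gridIval M j, b x = b y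

/-- The operator applied to a complex-valued function. -/
def PDCZ.appC (Op : PDCZ M) (b : ℝ → ℂ) : ℝ → ℂ := fun x => ∫ y, (Op.K x y : ℂ) * b y


-- AUXILIARY DEVELOPMENT

lemma Tile.two_zpow_pos (k : ℤ) : (0:ℝ) < 2 ^ k := zpow_pos (by norm_num) k

lemma Tile.len_pos (P : Tile M) : 0 < P.len := Tile.two_zpow_pos P.k

lemma Tile.lt_endpoints (P : Tile M) : (P.j : ℝ) * 2 ^ P.k < ((P.j : ℝ) + 1) * 2 ^ P.k := by
  have := Tile.two_zpow_pos P.k; nlinarith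

lemma Tile.mid_mem (P : Tile M) :
    (P.j : ℝ) * 2 ^ P.k ≤ ((P.j : ℝ) + 1/2) * 2 ^ P.k ∧
    ((P.j : ℝ) + 1/2) * 2 ^ P.k ≤ ((P.j : ℝ) + 1) * 2 ^ P.k := by
  have := Tile.two_zpow_pos P.k; constructor <;> nlinarith

lemma Tile.left_union_right (P : Tile M) : P.left ∪ P.right = P.ival := by
  rw [Tile.left, Tile.right, Tile.ival, Ico_union_Ico_eq_Ico P.mid_mem.1 P.mid_mem.2]

lemma Tile.disjoint_left_right (P : Tile M) : Disjoint P.left P.right := by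
  rw [Tile.left, Tile.right, Ico_disjoint_Ico]
  simp [le_refl, min_le_iff, le_max_iff]

lemma Tile.left_subset_ival (P : Tile M) : P.left ⊆ P.ival := by
  rw [← P.left_union_right]; exact subset_union_left

lemma Tile.right_subset_ival (P : Tile M) : P.right ⊆ P.ival := by
  rw [← P.left_union_right]; exact subset_union_right

lemma Tile.haar_of_not_mem (P : Tile M) {x : ℝ} (hx : x ∉ P.ival) : P.haar x = 0 := by
  rw [Tile.haar, indicator_of_notMem (fun h => hx (P.left_subset_ival h)),
    indicator_of_notMem (fun h => hx (P.right_subset_ival h))]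
  ring

lemma Tile.haar_of_left (P : Tile M) {x : ℝ} (hx : x ∈ P.left) :
    P.haar x = (Real.sqrt P.len)⁻¹ := by
  rw [Tile.haar, indicator_of_mem hx,
    indicator_of_notMem (disjoint_left.1 P.disjoint_left_right hx)]
  simp

lemma Tile.haar_of_right (P : Tile M) {x : ℝ} (hx : x ∈ P.right) :
    P.haar x = -(Real.sqrt P.len)⁻¹ := by
  rw [Tile.haar, indicator_of_mem hx,
    indicator_of_notMem (disjoint_right.1 P.disjoint_left_right hx)]
  simp

lemma Tile.haar_sq (P : Tile M) (x : ℝ) :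
    P.haar x ^ 2 = P.len⁻¹ * P.ival.indicator 1 x := by
  by_cases h : x ∈ P.ival
  · have h2 : x ∈ P.left ∪ P.right := by rw [P.left_union_right]; exact h
    have hs : Real.sqrt P.len ^ 2 = P.len := Real.sq_sqrt P.len_pos.le
    rcases h2 with h2 | h2
    · rw [P.haar_of_left h2, indicator_of_mem h]
      simp only [Pi.one_apply, mul_one]
      rw [inv_pow, hs]; simp
    · rw [P.haar_of_right h2, indicator_of_mem h]
      simp only [Pi.one_apply, mul_one]
      rw [neg_pow, inv_pow, hs]; ring
  · rw [P.haar_of_not_mem h, indicator_of_notMem h]; ring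

/-- Raw dyadic nesting: at comparable scales, dyadic intervals nest or are disjoint. -/
lemma raw_nesting (j k j' k' : ℤ) (h : k ≤ k') :
    Ico ((j:ℝ) * 2 ^ k) ((j+1) * 2 ^ k) ⊆ Ico ((j':ℝ) * 2 ^ k') ((j'+1) * 2 ^ k') ∨
    Disjoint (Ico ((j:ℝ) * 2 ^ k) ((j+1) * 2 ^ k))
      (Ico ((j':ℝ) * 2 ^ k') ((j'+1) * 2 ^ k')) := by
  set n : ℤ := 2 ^ (k' - k).toNat with hn
  have hkk : k' = (k' - k).toNat + k := by omega
  have hpow : (2:ℝ) ^ k' = (n : ℝ) * 2 ^ k := by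
    rw [hkk, zpow_add₀ (by norm_num : (2:ℝ) ≠ 0), zpow_natCast, hn]
    push_cast
    ring
  have h2k : (0:ℝ) < 2 ^ k := Tile.two_zpow_pos k
  by_cases h1 : j' * n ≤ j
  · by_cases h2 : j < (j' + 1) * n
    · left
      apply Ico_subset_Ico
      · rw [hpow]
        have : ((j' * n : ℤ) : ℝ) ≤ (j : ℝ) := by exact_mod_cast h1
        push_cast at this ⊢; nlinarith
      · rw [hpow]
        have : ((j : ℤ) : ℝ) + 1 ≤ (((j' + 1) * n : ℤ) : ℝ) := by exact_mod_cast (by omega : j + 1 ≤ (j' + 1) * n)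
        push_cast at this ⊢; nlinarith
    · right
      rw [Ico_disjoint_Ico]
      refine le_trans (min_le_right _ _) (le_trans ?_ (le_max_left _ _))
      rw [hpow]
      have : (((j' + 1) * n : ℤ) : ℝ) ≤ (j : ℝ) := by exact_mod_cast (by omega : (j' + 1) * n ≤ j)
      push_cast at this ⊢; nlinarith
  · right
    rw [Ico_disjoint_Ico]
    refine le_trans (min_le_left _ _) (le_trans ?_ (le_max_right _ _))
    rw [hpow]
    have : ((j : ℤ) : ℝ) + 1 ≤ ((j' * n : ℤ) : ℝ) := by exact_mod_cast (by omega : j + 1 ≤ j' * n)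
    push_cast at this ⊢; nlinarith

lemma Tile.nest_or_disj {P Q : Tile M} (h : P.k ≤ Q.k) :
    P.le Q ∨ Disjoint P.ival Q.ival := raw_nesting P.j P.k Q.j Q.k h

lemma Tile.trichotomy (P Q : Tile M) :
    P.le Q ∨ Q.le P ∨ Disjoint P.ival Q.ival := by
  rcases le_total P.k Q.k with h | h
  · rcases Tile.nest_or_disj h with h1 | h1
    · exact Or.inl h1
    · exact Or.inr (Or.inr h1)
  · rcases Tile.nest_or_disj h with h1 | h1
    · exact Or.inr (Or.inl h1)
    · exact Or.inr (Or.inr h1.symm)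

lemma Tile.eq_of_ival_eq {P Q : Tile M} (h : P.ival = Q.ival) : P = Q := by
  rw [Tile.ival, Tile.ival, Ico_eq_Ico_iff (Or.inl P.lt_endpoints)] at h
  have hlen : (2:ℝ) ^ P.k = 2 ^ Q.k := by nlinarith [h.1, h.2]
  have hk : P.k = Q.k := zpow_right_injective₀ (by norm_num) (by norm_num) hlen
  have hj : P.j = Q.j := by
    have h2 : (0:ℝ) < 2 ^ P.k := Tile.two_zpow_pos P.k
    have : (P.j : ℝ) = Q.j := by
      have := h.1; rw [← hlen] at this; exact mul_right_cancel₀ (ne_of_gt h2) this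
    exact_mod_cast this
  cases P; cases Q; simp_all

lemma Tile.le_refl' (P : Tile M) : P.le P := subset_rfl

lemma Tile.ival_nonempty (P : Tile M) : P.ival.Nonempty :=
  nonempty_Ico.2 P.lt_endpoints

lemma Tile.k_le_of_le {P Q : Tile M} (h : P.le Q) : P.k ≤ Q.k := by
  have h2 := h; rw [Tile.le, Tile.ival, Tile.ival,
    Ico_subset_Ico_iff P.lt_endpoints] at h2
  have hP := Tile.two_zpow_pos P.k
  have hQ := Tile.two_zpow_pos Q.k
  have hlen : (2:ℝ) ^ P.k ≤ 2 ^ Q.k := by nlinarith [h2.1, h2.2]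
  by_contra hc
  push_neg at hc
  have : (2:ℝ) ^ Q.k < 2 ^ P.k := zpow_lt_zpow_right₀ (by norm_num) hc
  linarith

/-- Strict containment goes into one of the halves. -/
lemma Tile.subset_half {P Q : Tile M} (h : P.le Q) (hne : P ≠ Q) :
    P.ival ⊆ Q.left ∨ P.ival ⊆ Q.right := by
  have hk : P.k ≤ Q.k := Tile.k_le_of_le h
  have hk' : P.k ≤ Q.k - 1 := by
    rcases lt_or_eq_of_le hk with h1 | h1
    · omega
    · exfalso
      have h2 := h; rw [Tile.le, Tile.ival, Tile.ival,
        Ico_subset_Ico_iff P.lt_endpoints] at h2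
      have hlen : (2:ℝ) ^ P.k = 2 ^ Q.k := by rw [h1]
      have hpos := Tile.two_zpow_pos Q.k
      rw [hlen] at h2
      have hle1 := le_of_mul_le_mul_right h2.2 hpos
      have hle2 := le_of_mul_le_mul_right h2.1 hpos
      have hj : (P.j : ℝ) = Q.j := by linarith
      apply hne
      apply Tile.eq_of_ival_eq
      rw [Tile.ival, Tile.ival, hj, h1]
  have hhalf : (2:ℝ) ^ Q.k = 2 * 2 ^ (Q.k - 1) := by
    have h9 : (2:ℝ) ^ (Q.k - 1) * 2 = 2 ^ (Q.k - 1 + 1) :=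
      (zpow_add_one₀ (by norm_num) _).symm
    rw [_root_.mul_comm, h9]
    congr 1; omega
  have hleft : Q.left = Ico (((2 * Q.j : ℤ) : ℝ) * (2:ℝ) ^ (Q.k - 1))
      ((((2 * Q.j : ℤ) : ℝ) + 1) * (2:ℝ) ^ (Q.k - 1)) := by
    rw [Tile.left]
    congr 1 <;> (push_cast; rw [hhalf]; ring)
  have hright : Q.right = Ico (((2 * Q.j + 1 : ℤ) : ℝ) * (2:ℝ) ^ (Q.k - 1))
      ((((2 * Q.j + 1 : ℤ) : ℝ) + 1) * (2:ℝ) ^ (Q.k - 1)) := by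
    rw [Tile.right]
    congr 1 <;> (push_cast; rw [hhalf]; ring)
  rcases raw_nesting P.j P.k (2 * Q.j) (Q.k - 1) hk' with h1 | h1
  · left; rw [hleft]; exact h1
  · rcases raw_nesting P.j P.k (2 * Q.j + 1) (Q.k - 1) hk' with h2 | h2
    · right; rw [hright]; exact h2
    · exfalso
      obtain ⟨x, hx⟩ := P.ival_nonempty
      have hx2 : x ∈ Q.left ∪ Q.right := by rw [Q.left_union_right]; exact h hx
      rcases hx2 with h3 | h3
      · rw [hleft] at h3; exact Set.disjoint_left.1 h1 hx h3
      · rw [hright] at h3; exact Set.disjoint_left.1 h2 hx h3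

/-- The Haar function of `Q` is constant on any strictly smaller tile interval. -/
lemma Tile.haar_const_on {P Q : Tile M} (h : P.le Q) (hne : P ≠ Q) :
    ∃ κ : ℝ, ∀ x ∈ P.ival, Q.haar x = κ := by
  rcases Tile.subset_half h hne with h1 | h1
  · exact ⟨(Real.sqrt Q.len)⁻¹, fun x hx => Q.haar_of_left (h1 hx)⟩
  · exact ⟨-(Real.sqrt Q.len)⁻¹, fun x hx => Q.haar_of_right (h1 hx)⟩

/-- Finiteness of the set of tiles. -/
instance : Finite (Tile M) := by
  have hmem : ∀ P : Tile M,
      (P.j, P.k) ∈ (Icc (0:ℤ) (2 ^ (2 * M)) ×ˢ Icc (-(M:ℤ)) (M:ℤ)) := by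
    intro P
    refine ⟨mem_Icc.2 ⟨P.hj, ?_⟩, mem_Icc.2 ⟨P.hk_lb, P.hk_ub⟩⟩
    have h1 : ((P.j : ℝ) + 1) * 2 ^ P.k ≤ 2 ^ (M:ℤ) := P.hsub
    have h2 : (2:ℝ) ^ (-(M:ℤ)) ≤ 2 ^ P.k := zpow_le_zpow_right₀ (by norm_num) P.hk_lb
    have hj0 : (0:ℝ) ≤ P.j := by exact_mod_cast P.hj
    have hk0 := Tile.two_zpow_pos P.k
    have h3 : (P.j : ℝ) * 2 ^ (-(M:ℤ)) ≤ 2 ^ (M:ℤ) := by nlinarith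
    have hprod : (2:ℝ) ^ (-(M:ℤ)) * 2 ^ (M:ℤ) = 1 := by
      rw [← zpow_add₀ (by norm_num : (2:ℝ) ≠ 0)]; norm_num
    have hM0 := Tile.two_zpow_pos (M:ℤ)
    have h4 : (P.j : ℝ) ≤ 2 ^ (M:ℤ) * 2 ^ (M:ℤ) := by nlinarith
    have h5 : (2:ℝ) ^ (M:ℤ) * 2 ^ (M:ℤ) = ((2 ^ (2 * M) : ℤ) : ℝ) := by
      push_cast
      rw [← zpow_natCast (2:ℝ) (2 * M), ← zpow_add₀ (by norm_num : (2:ℝ) ≠ 0)]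
      congr 1; push_cast; ring
    rw [h5] at h4
    exact_mod_cast h4
  have hfin : (Icc (0:ℤ) (2 ^ (2 * M)) ×ˢ Icc (-(M:ℤ)) (M:ℤ)).Finite :=
    (Set.finite_Icc _ _).prod (Set.finite_Icc _ _)
  haveI := hfin.to_subtype
  apply Finite.of_injective
    (fun P : Tile M => (⟨(P.j, P.k), hmem P⟩ :
      {x // x ∈ (Icc (0:ℤ) (2 ^ (2 * M)) ×ˢ Icc (-(M:ℤ)) (M:ℤ))}))
  intro P Q h
  simp only [Subtype.mk.injEq, Prod.mk.injEq] at h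
  apply Tile.eq_of_ival_eq
  rw [Tile.ival, Tile.ival, h.1, h.2]

noncomputable instance : Fintype (Tile M) := Fintype.ofFinite _

/-! ### Integration toolkit -/

lemma integrable_ind_Ico (a b : ℝ) :
    Integrable ((Ico a b).indicator (1 : ℝ → ℝ)) := by
  rw [integrable_indicator_iff measurableSet_Ico]
  refine integrableOn_const ?_
  rw [Real.volume_Ico]
  exact ENNReal.ofReal_ne_top

lemma integral_ind_Ico (a b : ℝ) (h : a ≤ b) :
    ∫ x, (Ico a b).indicator (1:ℝ→ℝ) x = b - a := by
  rw [integral_indicator_one measurableSet_Ico, measureReal_def, Real.volume_Ico,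
    ENNReal.toReal_ofReal (by linarith)]

/-- Sets which are `Ico` intervals. -/
def IsIco (s : Set ℝ) : Prop := ∃ a b : ℝ, s = Ico a b

lemma IsIco.inter {s t : Set ℝ} (hs : IsIco s) (ht : IsIco t) : IsIco (s ∩ t) := by
  obtain ⟨a, b, rfl⟩ := hs; obtain ⟨c, d, rfl⟩ := ht
  exact ⟨max a c, min b d, Ico_inter_Ico⟩

lemma Tile.isIco_ival (P : Tile M) : IsIco P.ival := ⟨_, _, rfl⟩
lemma Tile.isIco_left (P : Tile M) : IsIco P.left := ⟨_, _, rfl⟩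
lemma Tile.isIco_right (P : Tile M) : IsIco P.right := ⟨_, _, rfl⟩

lemma IsIco.integrable_ind {s : Set ℝ} (hs : IsIco s) :
    Integrable (s.indicator (1 : ℝ → ℝ)) := by
  obtain ⟨a, b, rfl⟩ := hs; exact integrable_ind_Ico a b

lemma IsIco.measurableSet {s : Set ℝ} (hs : IsIco s) : MeasurableSet s := by
  obtain ⟨a, b, rfl⟩ := hs; exact measurableSet_Ico

lemma ind_mul_ind (s t : Set ℝ) (x : ℝ) :
    s.indicator (1:ℝ→ℝ) x * t.indicator 1 x = (s ∩ t).indicator 1 x := by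
  rw [← inter_indicator_mul]
  congr 1
  funext y
  simp

lemma IsIco.integrable_ind_mul_ind {s t : Set ℝ} (hs : IsIco s) (ht : IsIco t) :
    Integrable (fun x => s.indicator (1:ℝ→ℝ) x * t.indicator 1 x) := by
  have h : (fun x => s.indicator (1:ℝ→ℝ) x * t.indicator 1 x)
      = (s ∩ t).indicator 1 := funext fun x => ind_mul_ind s t x
  rw [h]
  exact (hs.inter ht).integrable_ind

lemma IsIco.integral_ind_mul_ind {s t : Set ℝ} (hs : IsIco s) (ht : IsIco t) :
    ∫ x, s.indicator (1:ℝ→ℝ) x * t.indicator 1 x = (volume (s ∩ t)).toReal := by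
  have h : (fun x => s.indicator (1:ℝ→ℝ) x * t.indicator 1 x)
      = (s ∩ t).indicator 1 := funext fun x => ind_mul_ind s t x
  rw [h, integral_indicator_one (hs.inter ht).measurableSet, measureReal_def]

lemma Tile.integral_ind_ival (P : Tile M) :
    ∫ x, P.ival.indicator (1:ℝ→ℝ) x = P.len := by
  rw [Tile.ival, integral_ind_Ico _ _ P.lt_endpoints.le, Tile.len]; ring

lemma Tile.integral_ind_left (P : Tile M) :
    ∫ x, P.left.indicator (1:ℝ→ℝ) x = P.len / 2 := by
  rw [Tile.left, integral_ind_Ico _ _ P.mid_mem.1, Tile.len]; ring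

lemma Tile.integral_ind_right (P : Tile M) :
    ∫ x, P.right.indicator (1:ℝ→ℝ) x = P.len / 2 := by
  rw [Tile.right, integral_ind_Ico _ _ P.mid_mem.2, Tile.len]; ring

lemma Tile.integrable_haar (P : Tile M) : Integrable P.haar := by
  have h := (P.isIco_left.integrable_ind.sub P.isIco_right.integrable_ind).const_mul
    (Real.sqrt P.len)⁻¹
  apply h.congr
  filter_upwards with x
  simp [Tile.haar]

lemma Tile.integral_haar (P : Tile M) : ∫ x, P.haar x = 0 := by
  simp only [Tile.haar]
  rw [integral_const_mul, integral_sub P.isIco_left.integrable_ind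
    P.isIco_right.integrable_ind, P.integral_ind_left, P.integral_ind_right]
  ring

lemma Tile.integrable_ind_mul_haar {s : Set ℝ} (hs : IsIco s) (Q : Tile M) :
    Integrable (fun x => s.indicator (1:ℝ→ℝ) x * Q.haar x) := by
  have h := ((hs.integrable_ind_mul_ind Q.isIco_left).sub
    (hs.integrable_ind_mul_ind Q.isIco_right)).const_mul (Real.sqrt Q.len)⁻¹
  apply h.congr
  filter_upwards with x
  simp only [Pi.sub_apply, Tile.haar]
  ring

lemma Tile.integrable_haar_mul_haar (P Q : Tile M) :
    Integrable (fun x => P.haar x * Q.haar x) := by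
  have h := ((Tile.integrable_ind_mul_haar P.isIco_left Q).sub
    (Tile.integrable_ind_mul_haar P.isIco_right Q)).const_mul (Real.sqrt P.len)⁻¹
  apply h.congr
  filter_upwards with x
  simp only [Pi.sub_apply, Tile.haar]
  ring

lemma Tile.integral_ind_mul_haar_of_subset {s : Set ℝ} (Q : Tile M)
    (h : Q.ival ⊆ s) : ∫ x, s.indicator (1:ℝ→ℝ) x * Q.haar x = 0 := by
  have he : (fun x => s.indicator (1:ℝ→ℝ) x * Q.haar x) = Q.haar := by
    funext x
    by_cases hx : x ∈ s
    · rw [indicator_of_mem hx]; simp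
    · rw [indicator_of_notMem hx, Q.haar_of_not_mem (fun hq => hx (h hq))]; ring
  rw [he, Q.integral_haar]

lemma Tile.integral_ind_mul_haar_of_disjoint {s : Set ℝ} (Q : Tile M)
    (h : Disjoint s Q.ival) : ∫ x, s.indicator (1:ℝ→ℝ) x * Q.haar x = 0 := by
  have he : (fun x => s.indicator (1:ℝ→ℝ) x * Q.haar x) = fun _ => (0:ℝ) := by
    funext x
    by_cases hx : x ∈ s
    · rw [Q.haar_of_not_mem (disjoint_left.1 h hx)]; ring
    · rw [indicator_of_notMem hx]; ring
  rw [he, integral_zero]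

lemma Tile.integral_haar_mul_haar_self (Q : Tile M) :
    ∫ x, Q.haar x * Q.haar x = 1 := by
  have he : (fun x => Q.haar x * Q.haar x) =
      fun x => Q.len⁻¹ * Q.ival.indicator 1 x := by
    funext x
    rw [← Q.haar_sq x]; ring
  rw [he, integral_const_mul, Q.integral_ind_ival]
  exact inv_mul_cancel₀ Q.len_pos.ne'

lemma Tile.integral_haar_mul_haar {P Q : Tile M} (hne : P ≠ Q) :
    ∫ x, P.haar x * Q.haar x = 0 := by
  rcases Tile.trichotomy P Q with h | h | h
  · obtain ⟨κ, hκ⟩ := Tile.haar_const_on h hne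
    have he : (fun x => P.haar x * Q.haar x) = fun x => κ * P.haar x := by
      funext x
      by_cases hx : x ∈ P.ival
      · rw [hκ x hx]; try ring
      · rw [P.haar_of_not_mem hx]; ring
    rw [he, integral_const_mul, P.integral_haar]; ring
  · obtain ⟨κ, hκ⟩ := Tile.haar_const_on h (Ne.symm hne)
    have he : (fun x => P.haar x * Q.haar x) = fun x => κ * Q.haar x := by
      funext x
      by_cases hx : x ∈ Q.ival
      · rw [hκ x hx]; try ring
      · rw [Q.haar_of_not_mem hx]; ring
    rw [he, integral_const_mul, Q.integral_haar]; ring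
  · have he : (fun x => P.haar x * Q.haar x) = fun _ => (0:ℝ) := by
      funext x
      by_cases hx : x ∈ P.ival
      · rw [Q.haar_of_not_mem (disjoint_left.1 h hx)]; ring
      · rw [P.haar_of_not_mem hx]; ring
    rw [he, integral_zero]

/-! ### Size machinery -/

lemma finsum_mem_eq_sum_toFinset (a : Tile M → ℝ) (s : Set (Tile M)) :
    ∑ᶠ P ∈ s, a P = ∑ P ∈ (Set.toFinite s).toFinset, a P := by
  rw [← finsum_mem_coe_finset, Set.Finite.coe_toFinset]

lemma Tree.len_pos (T : Tree M) : 0 < T.len := T.top.len_pos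

lemma Tile.len_ge (P : Tile M) : (2:ℝ) ^ (-(M:ℤ)) ≤ P.len :=
  zpow_le_zpow_right₀ (by norm_num) P.hk_lb

lemma bddAbove_sizes (a : Tile M → ℝ) (ha : ∀ P, 0 ≤ a P) (PP : Set (Tile M)) :
    BddAbove (insert 0 {s : ℝ |
      ∃ T : Tree M, T.tiles ⊆ PP ∧ IsConvex T.tiles ∧ s = treeSize a T}) := by
  refine ⟨(∑ P : Tile M, a P) * 2 ^ (M:ℤ), ?_⟩
  rintro s (rfl | ⟨T, _, _, rfl⟩)
  · have : (0:ℝ) ≤ ∑ P : Tile M, a P := Finset.sum_nonneg fun P _ => ha P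
    positivity
  · rw [treeSize, finsum_mem_eq_sum_toFinset]
    have hsub : (∑ P ∈ (Set.toFinite T.tiles).toFinset, a P) ≤ ∑ P : Tile M, a P :=
      Finset.sum_le_sum_of_subset_of_nonneg (Finset.subset_univ _) (fun P _ _ => ha P)
    have h1 : (2:ℝ) ^ (-(M:ℤ)) ≤ T.len := T.top.len_ge
    have h2 : (0:ℝ) < T.len := T.len_pos
    have h3 : (2:ℝ) ^ (-(M:ℤ)) * 2 ^ (M:ℤ) = 1 := by
      rw [← zpow_add₀ (by norm_num : (2:ℝ) ≠ 0)]; norm_num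
    have h4 : (0:ℝ) ≤ ∑ P ∈ (Set.toFinite T.tiles).toFinset, a P :=
      Finset.sum_nonneg fun P _ => ha P
    have h5 : (0:ℝ) < 2 ^ (M:ℤ) := Tile.two_zpow_pos _
    rw [div_le_iff₀ h2]
    nlinarith [mul_le_mul_of_nonneg_left h1 (mul_nonneg (le_trans h4 hsub) h5.le)]

lemma maxSize_nonneg (a : Tile M → ℝ) (ha : ∀ P, 0 ≤ a P) (PP : Set (Tile M)) :
    0 ≤ maxSize a PP :=
  le_csSup (bddAbove_sizes a ha PP) (mem_insert 0 _)

lemma treeSize_le_maxSize (a : Tile M → ℝ) (ha : ∀ P, 0 ≤ a P) (T : Tree M)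
    (hc : IsConvex T.tiles) : treeSize a T ≤ maxSize a univ :=
  le_csSup (bddAbove_sizes a ha univ)
    (mem_insert_of_mem _ ⟨T, subset_univ _, hc, rfl⟩)

/-- The complete tree below a tile. -/
def completeTree (Q : Tile M) : Tree M :=
  ⟨cTree Q, Q, Set.Subset.rfl, fun _ hP => hP⟩

lemma completeTree_convex (Q : Tile M) : IsConvex (completeTree Q).tiles :=
  fun _ _ P₂ h₂ _ _ h22 => Set.Subset.trans h22 h₂

/-- The finset of all tiles below a given tile. -/
noncomputable def below (Q : Tile M) : Finset (Tile M) :=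
  (Set.toFinite (cTree Q)).toFinset

lemma mem_below {P Q : Tile M} : P ∈ below Q ↔ P.le Q := by
  rw [below, Set.Finite.mem_toFinset]; rfl

lemma packing_bound (f : ℝ → ℝ) (Q : Tile M) :
    ∑ P ∈ below Q, waveCoeff f P ^ 2 ≤ bmoNorm M f ^ 2 * Q.len := by
  have ha : ∀ P : Tile M, 0 ≤ waveCoeff f P ^ 2 := fun P => sq_nonneg _
  have h0 : 0 ≤ maxSize (fun P : Tile M => waveCoeff f P ^ 2) univ :=
    maxSize_nonneg _ ha _
  have hb : bmoNorm M f ^ 2 = maxSize (fun P : Tile M => waveCoeff f P ^ 2) univ :=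
    Real.sq_sqrt h0
  have hts := treeSize_le_maxSize _ ha (completeTree Q) (completeTree_convex Q)
  rw [treeSize, finsum_mem_eq_sum_toFinset,
    div_le_iff₀ (completeTree Q).len_pos] at hts
  rw [hb]
  exact hts

lemma bmoNorm_nonneg (f : ℝ → ℝ) : 0 ≤ bmoNorm M f := Real.sqrt_nonneg _

/-! ### Sums of indicators and Haar functions -/

lemma Tile.volume_ival (P : Tile M) : volume P.ival = ENNReal.ofReal P.len := by
  rw [Tile.ival, Real.volume_Ico]
  congr 1
  rw [Tile.len]; ring

lemma volInter_le_right (P P' : Tile M) :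
    (volume (P.ival ∩ P'.ival)).toReal ≤ P'.len := by
  have h1 : volume (P.ival ∩ P'.ival) ≤ volume P'.ival :=
    measure_mono inter_subset_right
  calc (volume (P.ival ∩ P'.ival)).toReal
      ≤ (volume P'.ival).toReal :=
        ENNReal.toReal_mono (by rw [P'.volume_ival]; exact ENNReal.ofReal_ne_top) h1
    _ = P'.len := by rw [P'.volume_ival, ENNReal.toReal_ofReal P'.len_pos.le]

lemma volInter_le_left (P P' : Tile M) :
    (volume (P.ival ∩ P'.ival)).toReal ≤ P.len := by
  rw [inter_comm]; exact volInter_le_right P' P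

lemma volInter_zero {P P' : Tile M} (h1 : ¬ P'.le P) (h2 : ¬ P.le P') :
    (volume (P.ival ∩ P'.ival)).toReal = 0 := by
  rcases Tile.trichotomy P P' with h | h | h
  · exact absurd h h2
  · exact absurd h h1
  · rw [Set.disjoint_iff_inter_eq_empty.1 h, measure_empty]; simp

/-- A linear combination of tile-interval indicators. -/
noncomputable def vfun (s : Finset (Tile M)) (d : Tile M → ℝ) : ℝ → ℝ :=
  fun x => ∑ P ∈ s, d P * P.ival.indicator 1 x

/-- A linear combination of Haar functions. -/
noncomputable def wfun (t : Finset (Tile M)) (c : Tile M → ℝ) : ℝ → ℝ :=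
  fun x => ∑ Q ∈ t, c Q * Q.haar x

lemma integrable_vfun (s : Finset (Tile M)) (d : Tile M → ℝ) :
    Integrable (vfun s d) :=
  integrable_finset_sum _ fun P _ => P.isIco_ival.integrable_ind.const_mul (d P)

lemma integrable_wfun (t : Finset (Tile M)) (c : Tile M → ℝ) :
    Integrable (wfun t c) :=
  integrable_finset_sum _ fun Q _ => Q.integrable_haar.const_mul (c Q)

lemma vfun_mul_haar_eq (s : Finset (Tile M)) (d : Tile M → ℝ) (Q : Tile M) :
    (fun x => vfun s d x * Q.haar x)
      = fun x => ∑ P ∈ s, d P * (P.ival.indicator 1 x * Q.haar x) := by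
  funext x
  rw [vfun, Finset.sum_mul]
  exact Finset.sum_congr rfl fun P _ => by ring

lemma integrable_vfun_mul_haar (s : Finset (Tile M)) (d : Tile M → ℝ) (Q : Tile M) :
    Integrable (fun x => vfun s d x * Q.haar x) := by
  rw [vfun_mul_haar_eq]
  exact integrable_finset_sum _ fun P _ =>
    (Tile.integrable_ind_mul_haar P.isIco_ival Q).const_mul (d P)

lemma integral_vfun_mul_haar (s : Finset (Tile M)) (d : Tile M → ℝ) (Q : Tile M) :
    ∫ x, vfun s d x * Q.haar x
      = ∑ P ∈ s, d P * ∫ x, P.ival.indicator 1 x * Q.haar x := by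
  rw [vfun_mul_haar_eq, integral_finset_sum _ (fun P _ =>
    (Tile.integrable_ind_mul_haar P.isIco_ival Q).const_mul (d P))]
  exact Finset.sum_congr rfl fun P _ => integral_const_mul _ _

lemma vfun_mul_vfun_eq (s s' : Finset (Tile M)) (d d' : Tile M → ℝ) :
    (fun x => vfun s d x * vfun s' d' x)
      = fun x => ∑ P ∈ s, ∑ P' ∈ s',
          (d P * d' P') * (P.ival.indicator 1 x * P'.ival.indicator 1 x) := by
  funext x
  rw [vfun, vfun, Finset.sum_mul_sum]
  exact Finset.sum_congr rfl fun P _ => Finset.sum_congr rfl fun P' _ => by ring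

lemma integrable_vfun_mul_vfun (s s' : Finset (Tile M)) (d d' : Tile M → ℝ) :
    Integrable (fun x => vfun s d x * vfun s' d' x) := by
  rw [vfun_mul_vfun_eq]
  exact integrable_finset_sum _ fun P _ => integrable_finset_sum _ fun P' _ =>
    (P.isIco_ival.integrable_ind_mul_ind P'.isIco_ival).const_mul _

lemma integral_vfun_mul_vfun (s s' : Finset (Tile M)) (d d' : Tile M → ℝ) :
    ∫ x, vfun s d x * vfun s' d' x
      = ∑ P ∈ s, ∑ P' ∈ s',
          d P * d' P' * (volume (P.ival ∩ P'.ival)).toReal := by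
  rw [vfun_mul_vfun_eq, integral_finset_sum _ (fun P _ => integrable_finset_sum _
    (fun P' _ => (P.isIco_ival.integrable_ind_mul_ind P'.isIco_ival).const_mul _))]
  refine Finset.sum_congr rfl fun P _ => ?_
  rw [integral_finset_sum _ (fun P' _ =>
    (P.isIco_ival.integrable_ind_mul_ind P'.isIco_ival).const_mul _)]
  refine Finset.sum_congr rfl fun P' _ => ?_
  rw [integral_const_mul, P.isIco_ival.integral_ind_mul_ind P'.isIco_ival]

lemma vfun_mul_wfun_eq (s : Finset (Tile M)) (d : Tile M → ℝ) (t : Finset (Tile M))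
    (c : Tile M → ℝ) :
    (fun x => vfun s d x * wfun t c x)
      = fun x => ∑ Q ∈ t, c Q * (vfun s d x * Q.haar x) := by
  funext x
  rw [wfun, Finset.mul_sum]
  exact Finset.sum_congr rfl fun Q _ => by ring

lemma integrable_vfun_mul_wfun (s : Finset (Tile M)) (d : Tile M → ℝ)
    (t : Finset (Tile M)) (c : Tile M → ℝ) :
    Integrable (fun x => vfun s d x * wfun t c x) := by
  rw [vfun_mul_wfun_eq]
  exact integrable_finset_sum _ fun Q _ =>
    (integrable_vfun_mul_haar s d Q).const_mul _

lemma integral_vfun_mul_wfun (s : Finset (Tile M)) (d : Tile M → ℝ)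
    (t : Finset (Tile M)) (c : Tile M → ℝ) :
    ∫ x, vfun s d x * wfun t c x
      = ∑ Q ∈ t, c Q * ∫ x, vfun s d x * Q.haar x := by
  rw [vfun_mul_wfun_eq, integral_finset_sum _ (fun Q _ =>
    (integrable_vfun_mul_haar s d Q).const_mul _)]
  exact Finset.sum_congr rfl fun Q _ => integral_const_mul _ _

lemma wfun_mul_wfun_eq (t t' : Finset (Tile M)) (c c' : Tile M → ℝ) :
    (fun x => wfun t c x * wfun t' c' x)
      = fun x => ∑ Q ∈ t, ∑ Q' ∈ t',
          (c Q * c' Q') * (Q.haar x * Q'.haar x) := by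
  funext x
  rw [wfun, wfun, Finset.sum_mul_sum]
  exact Finset.sum_congr rfl fun Q _ => Finset.sum_congr rfl fun Q' _ => by ring

lemma integrable_wfun_mul_wfun (t t' : Finset (Tile M)) (c c' : Tile M → ℝ) :
    Integrable (fun x => wfun t c x * wfun t' c' x) := by
  rw [wfun_mul_wfun_eq]
  exact integrable_finset_sum _ fun Q _ => integrable_finset_sum _ fun Q' _ =>
    (Q.integrable_haar_mul_haar Q').const_mul _

lemma integral_wfun_mul_wfun_self (t : Finset (Tile M)) (c : Tile M → ℝ) :
    ∫ x, wfun t c x * wfun t c x = ∑ Q ∈ t, c Q ^ 2 := by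
  rw [wfun_mul_wfun_eq, integral_finset_sum _ (fun Q _ => integrable_finset_sum _
    (fun Q' _ => (Q.integrable_haar_mul_haar Q').const_mul _))]
  refine Finset.sum_congr rfl fun Q hQ => ?_
  rw [integral_finset_sum _ (fun Q' _ => (Q.integrable_haar_mul_haar Q').const_mul _)]
  rw [Finset.sum_eq_single Q]
  · rw [integral_const_mul, Q.integral_haar_mul_haar_self]; ring
  · intro Q' _ hne
    rw [integral_const_mul, Tile.integral_haar_mul_haar (Ne.symm hne)]; ring
  · intro h; exact absurd hQ h

/-- Bessel's inequality for the Haar system. -/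
lemma bessel (s : Finset (Tile M)) (d : Tile M → ℝ) (t : Finset (Tile M)) :
    ∑ Q ∈ t, (∫ x, vfun s d x * Q.haar x) ^ 2 ≤ ∫ x, vfun s d x * vfun s d x := by
  set c : Tile M → ℝ := fun Q => ∫ x, vfun s d x * Q.haar x with hc
  have hvw : ∫ x, vfun s d x * wfun t c x = ∑ Q ∈ t, c Q ^ 2 := by
    rw [integral_vfun_mul_wfun]
    exact Finset.sum_congr rfl fun Q _ => by rw [hc]; ring
  have hww : ∫ x, wfun t c x * wfun t c x = ∑ Q ∈ t, c Q ^ 2 :=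
    integral_wfun_mul_wfun_self t c
  have hnn : 0 ≤ ∫ x, (vfun s d x - wfun t c x) ^ 2 :=
    integral_nonneg fun x => sq_nonneg _
  have hexp : ∫ x, (vfun s d x - wfun t c x) ^ 2
      = (∫ x, vfun s d x * vfun s d x) - (2 * ∑ Q ∈ t, c Q ^ 2 - ∑ Q ∈ t, c Q ^ 2) := by
    have he : (fun x => (vfun s d x - wfun t c x) ^ 2)
        = fun x => vfun s d x * vfun s d x
            - (2 * (vfun s d x * wfun t c x) - wfun t c x * wfun t c x) := by
      funext x; ring
    have hint1 : Integrable (fun x => 2 * (vfun s d x * wfun t c x)) :=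
      (integrable_vfun_mul_wfun s d t c).const_mul 2
    have hint2 : Integrable
        (fun x => 2 * (vfun s d x * wfun t c x) - wfun t c x * wfun t c x) :=
      hint1.sub (integrable_wfun_mul_wfun t t c c)
    rw [he, integral_sub (integrable_vfun_mul_vfun s s d d) hint2,
      integral_sub hint1 (integrable_wfun_mul_wfun t t c c),
      integral_const_mul, hvw, hww]
  rw [hexp] at hnn
  linarith

/-! ### Pairwise term bound -/

open Classical in
/-- Interaction kernel dominating `|I_P ∩ I_{P'}|/(|I_P||I_{P'}|)`. -/
noncomputable def kap (P P' : Tile M) : ℝ :=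
  (if P'.le P then P.len⁻¹ else 0) + (if P.le P' then P'.len⁻¹ else 0)

lemma kap_symm (P P' : Tile M) : kap P P' = kap P' P := by
  rw [kap, kap, _root_.add_comm]

lemma term_core {u w ν m R S : ℝ} (hν : 0 ≤ ν) (hS : u * w ≤ S) (hS0 : 0 ≤ S)
    (hνle : ν ≤ m) (h6 : m ≤ R) : u * w * ν ≤ S * R := by
  have h1 : u * w * ν ≤ S * ν := mul_le_mul_of_nonneg_right hS hν
  have h2 : S * ν ≤ S * m := mul_le_mul_of_nonneg_left hνle hS0
  have h3 : S * m ≤ S * R := mul_le_mul_of_nonneg_left h6 hS0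
  linarith

lemma term_bound (f g : ℝ → ℝ) (P P' : Tile M) :
    waveCoeff f P * waveCoeff g P / P.len
      * (waveCoeff f P' * waveCoeff g P' / P'.len)
      * (volume (P.ival ∩ P'.ival)).toReal
    ≤ 1 / 2 * (waveCoeff f P ^ 2 * waveCoeff g P' ^ 2
        + waveCoeff f P' ^ 2 * waveCoeff g P ^ 2) * kap P P' := by
  classical
  have hl := P.len_pos
  have hl' := P'.len_pos
  have hν : 0 ≤ (volume (P.ival ∩ P'.ival)).toReal := ENNReal.toReal_nonneg
  have hAM : (waveCoeff f P * waveCoeff g P') * (waveCoeff f P' * waveCoeff g P)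
      ≤ 1 / 2 * (waveCoeff f P ^ 2 * waveCoeff g P' ^ 2
        + waveCoeff f P' ^ 2 * waveCoeff g P ^ 2) := by
    nlinarith [sq_nonneg (waveCoeff f P * waveCoeff g P' - waveCoeff f P' * waveCoeff g P)]
  have hS0 : (0:ℝ) ≤ 1 / 2 * (waveCoeff f P ^ 2 * waveCoeff g P' ^ 2
      + waveCoeff f P' ^ 2 * waveCoeff g P ^ 2) := by positivity
  have hrw : waveCoeff f P * waveCoeff g P / P.len
      * (waveCoeff f P' * waveCoeff g P' / P'.len)
      * (volume (P.ival ∩ P'.ival)).toReal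
      = (waveCoeff f P * waveCoeff g P') * (waveCoeff f P' * waveCoeff g P)
        * (volume (P.ival ∩ P'.ival)).toReal / (P.len * P'.len) := by
    ring
  rw [hrw, div_le_iff₀ (by positivity)]
  by_cases h1 : P'.le P
  · have hκ : P.len⁻¹ ≤ kap P P' := by
      rw [kap, if_pos h1]
      have : (0:ℝ) ≤ if P.le P' then P'.len⁻¹ else 0 := by
        split
        · positivity
        · exact le_rfl
      linarith
    have h6 : P'.len ≤ kap P P' * (P.len * P'.len) := by
      have := mul_le_mul_of_nonneg_right hκ (by positivity : (0:ℝ) ≤ P.len * P'.len)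
      calc P'.len = P.len⁻¹ * (P.len * P'.len) := by field_simp
        _ ≤ kap P P' * (P.len * P'.len) := this
    exact (term_core hν hAM hS0 (volInter_le_right P P') h6).trans_eq (by ring)
  · by_cases h2 : P.le P'
    · have hκ : P'.len⁻¹ ≤ kap P P' := by
        rw [kap, if_neg h1, if_pos h2]
        simp
      have h6 : P.len ≤ kap P P' * (P.len * P'.len) := by
        have := mul_le_mul_of_nonneg_right hκ (by positivity : (0:ℝ) ≤ P.len * P'.len)
        calc P.len = P'.len⁻¹ * (P.len * P'.len) := by field_simp <;> ring
          _ ≤ kap P P' * (P.len * P'.len) := this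
      exact (term_core hν hAM hS0 (volInter_le_left P P') h6).trans_eq (by ring)
    · rw [volInter_zero h1 h2, kap, if_neg h1, if_neg h2]
      simp

/-! ### The combinatorial estimate -/

lemma double_sum_bound (f g : ℝ → ℝ) (T : Tree M) :
    ∑ P ∈ below T.top, ∑ P' ∈ below T.top,
        waveCoeff f P * waveCoeff g P / P.len
          * (waveCoeff f P' * waveCoeff g P' / P'.len)
          * (volume (P.ival ∩ P'.ival)).toReal
      ≤ 2 * (bmoNorm M f ^ 2 * bmoNorm M g ^ 2) * T.len := by
  classical
  set D := below T.top with hD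
  set b : Tile M → ℝ := fun P => waveCoeff f P ^ 2 with hb
  set c : Tile M → ℝ := fun P => waveCoeff g P ^ 2 with hcc
  have hbnn : ∀ P, 0 ≤ b P := fun P => sq_nonneg _
  have hcnn : ∀ P, 0 ≤ c P := fun P => sq_nonneg _
  have step1 : ∑ P ∈ D, ∑ P' ∈ D,
      waveCoeff f P * waveCoeff g P / P.len
        * (waveCoeff f P' * waveCoeff g P' / P'.len)
        * (volume (P.ival ∩ P'.ival)).toReal
      ≤ ∑ P ∈ D, ∑ P' ∈ D, 1 / 2 * (b P * c P' + b P' * c P) * kap P P' :=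
    Finset.sum_le_sum fun P _ => Finset.sum_le_sum fun P' _ => term_bound f g P P'
  have hswap : ∑ P ∈ D, ∑ P' ∈ D, b P' * c P * kap P P'
      = ∑ P ∈ D, ∑ P' ∈ D, b P * c P' * kap P P' := by
    rw [Finset.sum_comm]
    exact Finset.sum_congr rfl fun P _ => Finset.sum_congr rfl fun P' _ => by
      rw [kap_symm]
  have step2 : ∑ P ∈ D, ∑ P' ∈ D, 1 / 2 * (b P * c P' + b P' * c P) * kap P P'
      = ∑ P ∈ D, ∑ P' ∈ D, b P * c P' * kap P P' := by
    have he : ∀ P P' : Tile M, 1 / 2 * (b P * c P' + b P' * c P) * kap P P'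
        = 1 / 2 * (b P * c P' * kap P P') + 1 / 2 * (b P' * c P * kap P P') := by
      intro P P'; ring
    calc ∑ P ∈ D, ∑ P' ∈ D, 1 / 2 * (b P * c P' + b P' * c P) * kap P P'
        = ∑ P ∈ D, ∑ P' ∈ D, (1 / 2 * (b P * c P' * kap P P')
            + 1 / 2 * (b P' * c P * kap P P')) := by
          exact Finset.sum_congr rfl fun P _ => Finset.sum_congr rfl fun P' _ => he P P'
      _ = 1 / 2 * (∑ P ∈ D, ∑ P' ∈ D, b P * c P' * kap P P')
            + 1 / 2 * (∑ P ∈ D, ∑ P' ∈ D, b P' * c P * kap P P') := by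
          simp only [Finset.sum_add_distrib, Finset.mul_sum]
      _ = ∑ P ∈ D, ∑ P' ∈ D, b P * c P' * kap P P' := by
          rw [hswap]; ring
  -- split the kernel
  have step3 : ∑ P ∈ D, ∑ P' ∈ D, b P * c P' * kap P P'
      ≤ 2 * (bmoNorm M f ^ 2 * bmoNorm M g ^ 2) * T.len := by
    have hkap : ∀ P P' : Tile M, b P * c P' * kap P P'
        = (if P'.le P then b P * c P' * P.len⁻¹ else 0)
          + (if P.le P' then b P * c P' * P'.len⁻¹ else 0) := by
      intro P P'
      rw [kap, _root_.mul_add]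
      congr 1 <;> split <;> ring
    rw [Finset.sum_congr rfl fun P _ => Finset.sum_congr rfl fun P' _ => hkap P P']
    simp only [Finset.sum_add_distrib]
    have hA : ∑ P ∈ D, ∑ P' ∈ D, (if P'.le P then b P * c P' * P.len⁻¹ else 0)
        ≤ bmoNorm M g ^ 2 * (bmoNorm M f ^ 2 * T.len) := by
      have hinner : ∀ P ∈ D, ∑ P' ∈ D, (if P'.le P then b P * c P' * P.len⁻¹ else 0)
          ≤ b P * P.len⁻¹ * (bmoNorm M g ^ 2 * P.len) := by
        intro P _
        have h1 : ∑ P' ∈ D, (if P'.le P then b P * c P' * P.len⁻¹ else 0)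
            = b P * P.len⁻¹ * ∑ P' ∈ D.filter (fun P' => P'.le P), c P' := by
          rw [Finset.sum_filter, Finset.mul_sum]
          exact Finset.sum_congr rfl fun P' _ => by split <;> ring
        rw [h1]
        apply mul_le_mul_of_nonneg_left _ (mul_nonneg (hbnn P) (inv_nonneg.2 P.len_pos.le))
        calc ∑ P' ∈ D.filter (fun P' => P'.le P), c P'
            ≤ ∑ P' ∈ below P, c P' := by
              apply Finset.sum_le_sum_of_subset_of_nonneg
              · intro P' hP'
                rw [mem_below]
                exact (Finset.mem_filter.1 hP').2
              · intro P' _ _; exact hcnn P'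
          _ ≤ bmoNorm M g ^ 2 * P.len := packing_bound g P
      calc ∑ P ∈ D, ∑ P' ∈ D, (if P'.le P then b P * c P' * P.len⁻¹ else 0)
          ≤ ∑ P ∈ D, b P * P.len⁻¹ * (bmoNorm M g ^ 2 * P.len) :=
            Finset.sum_le_sum hinner
        _ = bmoNorm M g ^ 2 * ∑ P ∈ D, b P := by
            rw [Finset.mul_sum]
            refine Finset.sum_congr rfl fun P _ => ?_
            rw [show b P * P.len⁻¹ * (bmoNorm M g ^ 2 * P.len)
                = bmoNorm M g ^ 2 * b P * (P.len⁻¹ * P.len) from by ring,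
              inv_mul_cancel₀ P.len_pos.ne', _root_.mul_one]
        _ ≤ bmoNorm M g ^ 2 * (bmoNorm M f ^ 2 * T.len) := by
            apply mul_le_mul_of_nonneg_left _ (sq_nonneg _)
            exact packing_bound f T.top
    have hB : ∑ P ∈ D, ∑ P' ∈ D, (if P.le P' then b P * c P' * P'.len⁻¹ else 0)
        ≤ bmoNorm M f ^ 2 * (bmoNorm M g ^ 2 * T.len) := by
      rw [Finset.sum_comm]
      have hinner : ∀ P' ∈ D, ∑ P ∈ D, (if P.le P' then b P * c P' * P'.len⁻¹ else 0)
          ≤ c P' * P'.len⁻¹ * (bmoNorm M f ^ 2 * P'.len) := by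
        intro P' _
        have h1 : ∑ P ∈ D, (if P.le P' then b P * c P' * P'.len⁻¹ else 0)
            = c P' * P'.len⁻¹ * ∑ P ∈ D.filter (fun P => P.le P'), b P := by
          rw [Finset.sum_filter, Finset.mul_sum]
          exact Finset.sum_congr rfl fun P _ => by split <;> ring
        rw [h1]
        apply mul_le_mul_of_nonneg_left _ (mul_nonneg (hcnn P') (inv_nonneg.2 P'.len_pos.le))
        calc ∑ P ∈ D.filter (fun P => P.le P'), b P
            ≤ ∑ P ∈ below P', b P := by
              apply Finset.sum_le_sum_of_subset_of_nonneg
              · intro P hP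
                rw [mem_below]
                exact (Finset.mem_filter.1 hP).2
              · intro P _ _; exact hbnn P
          _ ≤ bmoNorm M f ^ 2 * P'.len := packing_bound f P'
      calc ∑ P' ∈ D, ∑ P ∈ D, (if P.le P' then b P * c P' * P'.len⁻¹ else 0)
          ≤ ∑ P' ∈ D, c P' * P'.len⁻¹ * (bmoNorm M f ^ 2 * P'.len) :=
            Finset.sum_le_sum hinner
        _ = bmoNorm M f ^ 2 * ∑ P' ∈ D, c P' := by
            rw [Finset.mul_sum]
            refine Finset.sum_congr rfl fun P' _ => ?_
            rw [show c P' * P'.len⁻¹ * (bmoNorm M f ^ 2 * P'.len)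
                = bmoNorm M f ^ 2 * c P' * (P'.len⁻¹ * P'.len) from by ring,
              inv_mul_cancel₀ P'.len_pos.ne', _root_.mul_one]
        _ ≤ bmoNorm M f ^ 2 * (bmoNorm M g ^ 2 * T.len) := by
            apply mul_le_mul_of_nonneg_left _ (sq_nonneg _)
            exact packing_bound g T.top
    linarith
  calc _ ≤ _ := step1
    _ = _ := step2
    _ ≤ _ := step3

/-! ### The tree estimate and the main theorem -/

lemma tree_estimate (f g : ℝ → ℝ) (T : Tree M) :
    ∑ᶠ Q ∈ T.tiles, waveCoeff (paraHH M f g) Q ^ 2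
      ≤ 2 * (bmoNorm M f ^ 2 * bmoNorm M g ^ 2) * T.len := by
  classical
  set d : Tile M → ℝ := fun P => waveCoeff f P * waveCoeff g P / P.len with hd
  have hh : paraHH M f g = vfun Finset.univ d := by
    funext x
    rw [paraHH, finsum_eq_sum_of_fintype, vfun]
    exact Finset.sum_congr rfl fun P _ => by rw [hd]; ring
  have hQtop : ∀ Q, Q ∈ (Set.toFinite T.tiles).toFinset → Q.le T.top := fun Q hQ =>
    T.le_top Q ((Set.Finite.mem_toFinset _).1 hQ)
  have hcoeff : ∀ Q ∈ (Set.toFinite T.tiles).toFinset,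
      waveCoeff (paraHH M f g) Q = ∫ x, vfun (below T.top) d x * Q.haar x := by
    intro Q hQ
    calc waveCoeff (paraHH M f g) Q
        = ∫ x, vfun Finset.univ d x * Q.haar x := by rw [waveCoeff, hh]
      _ = ∑ P ∈ Finset.univ, d P * ∫ x, P.ival.indicator 1 x * Q.haar x :=
          integral_vfun_mul_haar _ _ _
      _ = ∑ P ∈ below T.top, d P * ∫ x, P.ival.indicator 1 x * Q.haar x := by
          symm
          apply Finset.sum_subset (Finset.subset_univ _)
          intro P _ hP
          rw [mem_below] at hP
          rcases Tile.trichotomy T.top P with h | h | h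
          · rw [Tile.integral_ind_mul_haar_of_subset Q
              (Set.Subset.trans (hQtop Q hQ) h), mul_zero]
          · exact absurd h hP
          · rw [Tile.integral_ind_mul_haar_of_disjoint Q
              (h.symm.mono_right (hQtop Q hQ)), mul_zero]
      _ = ∫ x, vfun (below T.top) d x * Q.haar x :=
          (integral_vfun_mul_haar _ _ _).symm
  rw [finsum_mem_eq_sum_toFinset]
  calc ∑ Q ∈ (Set.toFinite T.tiles).toFinset, waveCoeff (paraHH M f g) Q ^ 2
      = ∑ Q ∈ (Set.toFinite T.tiles).toFinset,
          (∫ x, vfun (below T.top) d x * Q.haar x) ^ 2 :=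
        Finset.sum_congr rfl fun Q hQ => by rw [hcoeff Q hQ]
    _ ≤ ∫ x, vfun (below T.top) d x * vfun (below T.top) d x := bessel _ _ _
    _ = ∑ P ∈ below T.top, ∑ P' ∈ below T.top,
          d P * d P' * (volume (P.ival ∩ P'.ival)).toReal :=
        integral_vfun_mul_vfun _ _ _ _
    _ ≤ 2 * (bmoNorm M f ^ 2 * bmoNorm M g ^ 2) * T.len := by
        simp only [hd]
        exact double_sum_bound f g T

/-- Lemma 6.3: `BMO × BMO → BMO` paraproduct estimate. -/
theorem statement12 :
    ∃ C : ℝ, 0 < C ∧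
      ∀ (M : ℕ) (f g : ℝ → ℝ), IsTestFun M f → IsTestFun M g →
        bmoNorm M (paraHH M f g) ≤ C * bmoNorm M f * bmoNorm M g := by
  refine ⟨2, by norm_num, ?_⟩
  intro M f g _ _
  have hF : 0 ≤ bmoNorm M f := bmoNorm_nonneg f
  have hG : 0 ≤ bmoNorm M g := bmoNorm_nonneg g
  have hmax : maxSize (fun Q : Tile M => waveCoeff (paraHH M f g) Q ^ 2) univ
      ≤ 2 * (bmoNorm M f ^ 2 * bmoNorm M g ^ 2) := by
    apply Real.sSup_le
    · rintro s (rfl | ⟨T, _, _, rfl⟩)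
      · positivity
      · rw [treeSize, div_le_iff₀ T.len_pos]
        exact tree_estimate f g T
    · positivity
  calc bmoNorm M (paraHH M f g)
      = Real.sqrt (maxSize (fun Q : Tile M => waveCoeff (paraHH M f g) Q ^ 2) univ) :=
        rfl
    _ ≤ Real.sqrt ((2 * bmoNorm M f * bmoNorm M g) ^ 2) := by
        apply Real.sqrt_le_sqrt
        nlinarith [sq_nonneg (bmoNorm M f * bmoNorm M g)]
    _ = 2 * bmoNorm M f * bmoNorm M g := Real.sqrt_sq (by positivity)


end Dyadic
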